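/- Let (C^1, …, C^k) be an admissible family in ℝ^n and assume each C^i has at least one extreme point. Let R := {(x, x^1, …, x^k, y) ∈ ℝ^n × (ℝ^n)^k × ℝ^k : Σ_{i=1}^k y_i = 1, y_i ≥ 0 for all i, Σ_{i=1}^k x^i = x, and for every i: (y_i > 0 → x^i ∈ y_i • C^i) and (y_i = 0 → x^i ∈ rec(C^i))}. Then R contains no line (there is no point p ∈ R and direction d ≠ 0 with p + t·d ∈ R for all t ∈ ℝ), and every extreme point (x, x^1, …, x^k, y) of R satisfies y ∈ {0,1}^k. -/

import Mathlib

open Pointwise Set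

noncomputable section

/-- The recession cone of a set. -/
def recCone {E : Type*} [AddCommGroup E] [Module ℝ E] (S : Set E) : Set E :=
  {d | ∀ x ∈ S, ∀ t : ℝ, 0 ≤ t → x + t • d ∈ S}

open Filter

lemma zero_mem_recCone {n : ℕ} {S : Set (Fin n → ℝ)} : (0 : Fin n → ℝ) ∈ recCone S := by
  intro x hx t ht; simpa using hx

lemma recCone_subset_recCone_recCone {n : ℕ} {S : Set (Fin n → ℝ)} :
    recCone S ⊆ recCone (recCone S) := by
  intro d hd u hu t ht x hx s hs
  have : x + s • u + (s * t) • d ∈ S := hd _ (hu x hx s hs) _ (mul_nonneg hs ht)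
  simpa [smul_add, smul_smul, add_assoc] using this

lemma recCone_recCone_subset {n : ℕ} {S : Set (Fin n → ℝ)} :
    recCone (recCone S) ⊆ recCone S := by
  intro d hd
  have := hd 0 zero_mem_recCone 1 zero_le_one
  simpa using this

lemma isClosed_recCone {n : ℕ} {S : Set (Fin n → ℝ)} (hS : IsClosed S) :
    IsClosed (recCone S) := by
  have : recCone S = ⋂ x ∈ S, ⋂ t ∈ Set.Ici (0:ℝ), (fun d => x + t • d) ⁻¹' S := by
    ext d
    simp only [recCone, Set.mem_setOf_eq, Set.mem_iInter, Set.mem_preimage, Set.mem_Ici]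
  rw [this]
  refine isClosed_biInter fun x hx => isClosed_biInter fun t ht => ?_
  exact hS.preimage (by fun_prop)

lemma convex_recCone {n : ℕ} {S : Set (Fin n → ℝ)} (hS : Convex ℝ S) :
    Convex ℝ (recCone S) := by
  intro d₁ h1 d₂ h2 a b ha hb hab x hx t ht
  have := hS (h1 x hx t ht) (h2 x hx t ht) ha hb hab
  convert this using 1
  match_scalars <;> ring_nf <;> nlinarith [hab]

lemma ray_mem_recCone {n : ℕ} {S : Set (Fin n → ℝ)} (hcl : IsClosed S) (hcv : Convex ℝ S)
    {x₀ d : Fin n → ℝ} (h : ∀ t : ℝ, 0 ≤ t → x₀ + t • d ∈ S) : d ∈ recCone S := by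
  intro x hx t ht
  rcases eq_or_lt_of_le ht with rfl | ht'
  · simpa using hx
  · set u : ℕ → (Fin n → ℝ) := fun m => x + t • d + ((1:ℝ)/(m+1)) • (x₀ - x) with hu
    have humem : ∀ m : ℕ, u m ∈ S := by
      intro m
      have hm : (0:ℝ) < (m:ℝ) + 1 := by positivity
      have hlam : (0:ℝ) < 1/((m:ℝ)+1) := by positivity
      have hle : (1:ℝ)/((m:ℝ)+1) ≤ 1 := by
        rw [div_le_one hm]; linarith [Nat.cast_nonneg (α := ℝ) m]
      have hmem := h (t * ((m:ℝ)+1)) (by positivity)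
      have hc := hcv (a := 1 - 1/((m:ℝ)+1)) (b := 1/((m:ℝ)+1)) hx hmem
        (by linarith) hlam.le (by ring)
      convert hc using 1
      have hne : ((m:ℝ)+1) ≠ 0 := ne_of_gt hm
      match_scalars <;> field_simp <;> ring
    have htend : Tendsto u atTop (nhds (x + t • d)) := by
      have h0 : Tendsto (fun m : ℕ => (1:ℝ)/((m:ℝ)+1)) atTop (nhds 0) :=
        tendsto_one_div_add_atTop_nhds_zero_nat
      have h1 := h0.smul_const (x₀ - x)
      rw [zero_smul] at h1
      have h2 := (tendsto_const_nhds (x := x + t • d) (f := atTop (α := ℕ))).add h1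
      rw [add_zero] at h2
      exact h2
    exact hcl.mem_of_tendsto htend (Filter.Eventually.of_forall humem)

lemma recCone_pointed {n : ℕ} {C : Set (Fin n → ℝ)}
    (he : (Set.extremePoints ℝ C).Nonempty) {d : Fin n → ℝ}
    (h1 : d ∈ recCone C) (h2 : -d ∈ recCone C) : d = 0 := by
  obtain ⟨e, heC, hex⟩ := he
  have ha := h1 e heC 1 zero_le_one
  have hb := h2 e heC 1 zero_le_one
  rw [one_smul] at ha hb
  have hseg : e ∈ openSegment ℝ (e + d) (e + -d) :=
    ⟨1/2, 1/2, by norm_num, by norm_num, by norm_num, by module⟩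
  have heq : e + d = e := hex ha hb hseg
  exact add_eq_left.mp heq

lemma sum_ite_pair {k : ℕ} {M : Type*} [AddCommMonoid M] {j l : Fin k} (hjl : j ≠ l) (a b : M) :
    ∑ i, (if i = j then a else if i = l then b else 0) = a + b := by
  have h : ∀ i : Fin k, (if i = j then a else if i = l then b else 0)
      = (if i = j then a else 0) + (if i = l then b else 0) := by
    intro i
    by_cases h1 : i = j
    · subst h1; simp [hjl, Ne.symm hjl]
    · by_cases h2 : i = l <;> simp [h1, h2, Ne.symm hjl]
  simp only [h]
  rw [Finset.sum_add_distrib, Finset.sum_ite_eq' _ j, Finset.sum_ite_eq' _ l]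
  simp

/-- An admissible family: each member is a nonempty closed convex set and all members share
the same recession cone. -/
def Admissible {n k : ℕ} (C : Fin k → Set (Fin n → ℝ)) : Prop :=
  (∀ i, (C i).Nonempty) ∧ (∀ i, IsClosed (C i)) ∧ (∀ i, Convex ℝ (C i)) ∧
    ∀ i j, recCone (C i) = recCone (C j)

/-- The continuous relaxation of the extended formulation (2). -/
def Rset {n k : ℕ} (C : Fin k → Set (Fin n → ℝ)) :
    Set ((Fin n → ℝ) × (Fin k → Fin n → ℝ) × (Fin k → ℝ)) :=
  {p | (∑ i, p.2.2 i = 1) ∧ (∀ i, 0 ≤ p.2.2 i) ∧ (∑ i, p.2.1 i = p.1) ∧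
    ∀ i, (0 < p.2.2 i → p.2.1 i ∈ p.2.2 i • C i) ∧
         (p.2.2 i = 0 → p.2.1 i ∈ recCone (C i))}

/-- The continuous relaxation of the extended formulation is line-free and all its extreme
points have integral `y` components. -/
theorem stmt1 {n k : ℕ} (C : Fin k → Set (Fin n → ℝ)) (hC : Admissible C)
    (hext : ∀ i, (Set.extremePoints ℝ (C i)).Nonempty) :
    (¬ ∃ p ∈ Rset C, ∃ d, d ≠ 0 ∧ ∀ t : ℝ, p + t • d ∈ Rset C) ∧
    (∀ q ∈ Set.extremePoints ℝ (Rset C), ∀ i, q.2.2 i = 0 ∨ q.2.2 i = 1) := by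
  obtain ⟨hne, hcl, hcv, -⟩ := hC
  constructor
  ·
    rintro ⟨⟨x, X, y⟩, hp, ⟨dx, dX, dy⟩, hdne, hline⟩
    simp only [Rset, Set.mem_setOf_eq, Prod.smul_mk, Prod.mk_add_mk, Pi.add_apply,
      Pi.smul_apply, smul_eq_mul] at hline hp
    -- dy = 0
    have hdy : ∀ i, dy i = 0 := by
      intro i
      by_contra hdyi
      have h1 := (hline ((-1 - y i) / dy i)).2.1 i
      have heq : y i + (-1 - y i) / dy i * dy i = -1 := by field_simp; ring
      rw [heq] at h1
      linarith
    -- dX = 0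
    have hdX : ∀ i, dX i = 0 := by
      intro i
      rcases (lt_or_eq_of_le (hp.2.1 i)).symm with h0 | h0
      · -- y i = 0
        have hy0 : y i = 0 := h0.symm
        have hXrec : ∀ t : ℝ, X i + t • dX i ∈ recCone (C i) := by
          intro t
          have := ((hline t).2.2.2 i).2
          simp only [hy0, hdy i, mul_zero, add_zero] at this
          exact this trivial
        have hKcl : IsClosed (recCone (C i)) := isClosed_recCone (hcl i)
        have hKcv : Convex ℝ (recCone (C i)) := convex_recCone (hcv i)
        have h1 : dX i ∈ recCone (recCone (C i)) :=
          ray_mem_recCone hKcl hKcv (fun t _ => hXrec t)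
        have h2 : -(dX i) ∈ recCone (recCone (C i)) := by
          refine ray_mem_recCone (x₀ := X i) hKcl hKcv (fun t _ => ?_)
          have := hXrec (-t)
          simpa [smul_neg, neg_smul] using this
        exact recCone_pointed (hext i) (recCone_recCone_subset h1) (recCone_recCone_subset h2)
      · -- y i > 0
        have hyne : y i ≠ 0 := ne_of_gt h0
        have hCline : ∀ s : ℝ, (y i)⁻¹ • X i + s • ((y i)⁻¹ • dX i) ∈ C i := by
          intro s
          have hmem := ((hline s).2.2.2 i).1
          simp only [hdy i, mul_zero, add_zero] at hmem
          obtain ⟨w, hwC, hw⟩ := Set.mem_smul_set.mp (hmem h0)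
          have hweq : w = (y i)⁻¹ • X i + s • ((y i)⁻¹ • dX i) := by
            have h3 := congrArg (fun z => (y i)⁻¹ • z) hw
            simp only [smul_add, smul_smul, inv_mul_cancel₀ hyne, one_smul] at h3
            rw [h3, mul_comm, ← smul_smul]
          rwa [← hweq]
        have h1 : (y i)⁻¹ • dX i ∈ recCone (C i) :=
          ray_mem_recCone (hcl i) (hcv i) (fun t _ => hCline t)
        have h2 : -((y i)⁻¹ • dX i) ∈ recCone (C i) := by
          refine ray_mem_recCone (x₀ := (y i)⁻¹ • X i) (hcl i) (hcv i) (fun t _ => ?_)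
          have := hCline (-t)
          simpa [smul_neg, neg_smul] using this
        have hz := recCone_pointed (hext i) h1 h2
        rcases smul_eq_zero.mp hz with h | h
        · exact absurd h (inv_ne_zero hyne)
        · exact h
    -- dx = 0
    have hdx : dx = 0 := by
      have h0 := (hline 0).2.2.1
      have h1 := (hline 1).2.2.1
      simp only [zero_smul, add_zero, hdX, one_smul] at h0 h1
      have := h1.symm.trans h0
      exact add_eq_left.mp this
    apply hdne
    refine Prod.ext hdx (Prod.ext ?_ ?_) <;> funext i <;> simp [hdX, hdy]
  ·
    rintro ⟨x, X, y⟩ ⟨hqR, hq⟩ j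
    by_contra hcon
    push_neg at hcon
    obtain ⟨hj0, hj1⟩ := hcon
    simp only [Rset, Set.mem_setOf_eq] at hqR
    obtain ⟨hsum, hnn, hsX, hcond⟩ := hqR
    have hyj : 0 < y j := lt_of_le_of_ne (hnn j) (Ne.symm hj0)
    have hyj1 : y j < 1 := by
      have hle : y j ≤ 1 := hsum ▸ Finset.single_le_sum (fun i _ => hnn i) (Finset.mem_univ j)
      exact lt_of_le_of_ne hle hj1
    -- find l ≠ j with y l > 0
    have hrest : ∑ i ∈ Finset.univ.erase j, y i = 1 - y j := by
      have := Finset.add_sum_erase Finset.univ y (Finset.mem_univ j)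
      rw [hsum] at this
      linarith
    obtain ⟨l, hlmem, hyl⟩ : ∃ l ∈ Finset.univ.erase j, 0 < y l := by
      by_contra hc
      push_neg at hc
      have : ∑ i ∈ Finset.univ.erase j, y i ≤ 0 :=
        Finset.sum_nonpos fun i hi => (hc i hi)
      linarith
    have hlj : l ≠ j := (Finset.mem_erase.mp hlmem).1
    set ε := min (y j) (y l) / 2 with hεdef
    have hε : 0 < ε := by positivity
    have hεj : ε < y j := by
      have : min (y j) (y l) ≤ y j := min_le_left _ _
      simp only [hεdef]; linarith
    have hεl : ε < y l := by
      have : min (y j) (y l) ≤ y l := min_le_right _ _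
      simp only [hεdef]; linarith
    obtain ⟨zj, hzjC, hzj⟩ := Set.mem_smul_set.mp ((hcond j).1 hyj)
    obtain ⟨zl, hzlC, hzl⟩ := Set.mem_smul_set.mp ((hcond l).1 hyl)
    -- perturbed points
    have key : ∀ c : ℝ, 0 < y j + c → 0 < y l - c →
        ((x + (c • zj - c • zl),
          (fun i => X i + (if i = j then c • zj else if i = l then -(c • zl) else 0)),
          (fun i => y i + (if i = j then c else if i = l then -c else 0))) : _) ∈ Rset C := by
      intro c hcj hcl
      simp only [Rset, Set.mem_setOf_eq]
      refine ⟨?_, ?_, ?_, ?_⟩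
      · rw [Finset.sum_add_distrib, hsum, sum_ite_pair (Ne.symm hlj) c (-c)]
        ring
      · intro i
        by_cases h1 : i = j
        · subst h1; rw [if_pos rfl]; linarith
        · by_cases h2 : i = l
          · subst h2; rw [if_neg h1, if_pos rfl]; linarith
          · simp only [if_neg h1, if_neg h2, add_zero]; exact hnn i
      · rw [Finset.sum_add_distrib, hsX, sum_ite_pair (Ne.symm hlj) (c • zj) (-(c • zl))]
        abel
      · intro i
        by_cases h1 : i = j
        · subst h1
          rw [if_pos rfl, if_pos rfl]
          constructor
          · intro _
            refine Set.mem_smul_set.mpr ⟨zj, hzjC, ?_⟩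
            rw [add_smul, hzj]
          · intro h; exact absurd h (ne_of_gt hcj)
        · by_cases h2 : i = l
          · subst h2
            rw [if_neg h1, if_neg h1, if_pos rfl, if_pos rfl]
            constructor
            · intro _
              refine Set.mem_smul_set.mpr ⟨zl, hzlC, ?_⟩
              rw [add_smul, hzl, neg_smul]
            · intro h
              exfalso
              linarith
          · simp only [if_neg h1, if_neg h2, add_zero]
            exact hcond i
    have hmem1 := key ε (by linarith) (by linarith)
    have hmem2 := key (-ε) (by linarith) (by linarith)
    set e : (Fin n → ℝ) × (Fin k → Fin n → ℝ) × (Fin k → ℝ) :=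
      (ε • zj - ε • zl,
       (fun i => if i = j then ε • zj else if i = l then -(ε • zl) else 0),
       (fun i => if i = j then ε else if i = l then -ε else 0)) with hedef
    have he1 : ((x, X, y) : (Fin n → ℝ) × (Fin k → Fin n → ℝ) × (Fin k → ℝ)) + e
        = (x + (ε • zj - ε • zl),
          (fun i => X i + (if i = j then ε • zj else if i = l then -(ε • zl) else 0)),
          (fun i => y i + (if i = j then ε else if i = l then -ε else 0))) := by
      refine Prod.ext rfl (Prod.ext ?_ ?_) <;> rfl
    have he2 : ((x, X, y) : (Fin n → ℝ) × (Fin k → Fin n → ℝ) × (Fin k → ℝ)) - e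
        = (x + ((-ε) • zj - (-ε) • zl),
          (fun i => X i + (if i = j then (-ε) • zj else if i = l then -((-ε) • zl) else 0)),
          (fun i => y i + (if i = j then (-ε) else if i = l then -(-ε) else 0))) := by
      refine Prod.ext ?_ (Prod.ext ?_ ?_)
      · show x - (ε • zj - ε • zl) = x + ((-ε) • zj - (-ε) • zl)
        module
      · funext i
        show X i - (if i = j then ε • zj else if i = l then -(ε • zl) else 0)
          = X i + (if i = j then (-ε) • zj else if i = l then -((-ε) • zl) else 0)
        by_cases h1 : i = j
        · rw [if_pos h1, if_pos h1]; module
        · by_cases h2 : i = l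
          · rw [if_neg h1, if_neg h1, if_pos h2, if_pos h2]; module
          · rw [if_neg h1, if_neg h1, if_neg h2, if_neg h2]; module
      · funext i
        show y i - (if i = j then ε else if i = l then -ε else 0)
          = y i + (if i = j then (-ε) else if i = l then -(-ε) else 0)
        by_cases h1 : i = j
        · rw [if_pos h1, if_pos h1]; ring
        · by_cases h2 : i = l
          · rw [if_neg h1, if_neg h1, if_pos h2, if_pos h2]; ring
          · rw [if_neg h1, if_neg h1, if_neg h2, if_neg h2]; ring
    rw [← he1] at hmem1
    rw [← he2] at hmem2
    have hseg : ((x, X, y) : (Fin n → ℝ) × (Fin k → Fin n → ℝ) × (Fin k → ℝ)) ∈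
        openSegment ℝ ((x, X, y) + e) ((x, X, y) - e) :=
      ⟨1/2, 1/2, by norm_num, by norm_num, by norm_num, by module⟩
    have heq := hq hmem1 hmem2 hseg
    have he0 : e = 0 := by
      have := heq
      rwa [add_eq_left] at this
    have hcomp : (if j = j then ε else if j = l then -ε else 0) = 0 :=
      congrFun (congrArg (fun r => r.2.2) he0) j
    rw [if_pos rfl] at hcomp
    linarith
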